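/- Generalized splitting: let (Op, w) induce distance d, let ω_max be the maximal length of the left side of an operation in Op, and let α be an alignment with l(α) = P₁' ∘ P₂'. Then α can be written as α = α₁ ∘ β ∘ α₂ where β is either empty or a single operation, l(α₁) is a prefix of P₁' whose complementary suffix in P₁' has length < ω_max, and l(α₂) is a suffix of P₂' whose complementary prefix in P₂' has length < ω_max. -/

import Mathlib

private lemma split_aux {α : Type*} (Op : Finset (List α × List α))
    (hω : 1 ≤ Op.sup (fun op => op.1.length)) :
    ∀ (al : List (List α × List α)), (∀ op ∈ al, op ∈ Op) →
    ∀ (P₁ P₂ : List α), (al.map Prod.fst).flatten = P₁ ++ P₂ →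
    ∃ al₁ β al₂ : List (List α × List α),
      al = al₁ ++ β ++ al₂ ∧ β.length ≤ 1 ∧
      (al₁.map Prod.fst).flatten <+: P₁ ∧
      P₁.length - (al₁.map Prod.fst).flatten.length < Op.sup (fun op => op.1.length) ∧
      (al₂.map Prod.fst).flatten <:+ P₂ ∧
      P₂.length - (al₂.map Prod.fst).flatten.length < Op.sup (fun op => op.1.length) := by
  intro al
  induction al with
  | nil =>
    intro _ P₁ P₂ h
    obtain ⟨rfl, rfl⟩ : P₁ = [] ∧ P₂ = [] := by
      have := h.symm
      simpa [List.append_eq_nil_iff] using this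
    exact ⟨[], [], [], by simp, by simp, by simp, by simpa using (Nat.lt_of_lt_of_le Nat.zero_lt_one hω), by simp,
      by simpa using (Nat.lt_of_lt_of_le Nat.zero_lt_one hω)⟩
  | cons op rest ih =>
    intro hal P₁ P₂ h
    by_cases hP : P₁ = []
    · subst hP
      refine ⟨[], [], op :: rest, by simp, by simp, by simp, by simpa using (Nat.lt_of_lt_of_le Nat.zero_lt_one hω), ?_, ?_⟩
      · simp only [List.nil_append] at h
        exact h ▸ List.suffix_refl _
      · simp only [List.nil_append] at h
        rw [h]
        simpa using (Nat.lt_of_lt_of_le Nat.zero_lt_one hω)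
    · simp only [List.map_cons, List.flatten_cons] at h
      have hop : op ∈ Op := hal op (by simp)
      have hωop : op.1.length ≤ Op.sup (fun op => op.1.length) :=
        Finset.le_sup (f := fun op => op.1.length) hop
      by_cases hle : op.1.length ≤ P₁.length
      · -- op.1 is a prefix of P₁
        have hpre : op.1 <+: P₁ :=
          List.prefix_of_prefix_length_le ⟨_, h⟩ (List.prefix_append P₁ P₂) hle
        obtain ⟨P₁', rfl⟩ := hpre
        have h' : ((rest.map Prod.fst).flatten) = P₁' ++ P₂ := by
          rw [List.append_assoc] at h
          exact List.append_cancel_left h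
        obtain ⟨al₁, β, al₂, heq, hβ, hpre', hlen₁, hsuf, hlen₂⟩ :=
          ih (fun o ho => hal o (by simp [ho])) P₁' P₂ h'
        refine ⟨op :: al₁, β, al₂, by simp [heq], hβ, ?_, ?_, hsuf, hlen₂⟩
        · obtain ⟨t, ht⟩ := hpre'
          exact ⟨t, by simp [← ht]⟩
        · simp only [List.map_cons, List.flatten_cons, List.length_append]
          omega
      · -- P₁ is a proper prefix of op.1
        push_neg at hle
        have hpre : P₁ <+: op.1 :=
          List.prefix_of_prefix_length_le (List.prefix_append P₁ P₂) ⟨_, h⟩ (le_of_lt hle)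
        obtain ⟨m, hm⟩ := hpre
        have hP₂ : P₂ = m ++ (rest.map Prod.fst).flatten := by
          rw [← hm, List.append_assoc] at h
          exact (List.append_cancel_left h).symm
        refine ⟨[], [op], rest, by simp, by simp, by simp, ?_, ⟨m, hP₂.symm⟩, ?_⟩
        · simp only [List.map_nil, List.flatten_nil, List.length_nil, Nat.sub_zero]
          exact lt_of_lt_of_le hle hωop
        · have hm' : m.length = op.1.length - P₁.length := by
            have := congrArg List.length hm
            simp at this; omega
          have hP₁ : 1 ≤ P₁.length := by
            cases P₁ with
            | nil => exact absurd rfl hP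
            | cons a l => simp
          rw [hP₂]
          simp only [List.length_append]
          omega

/-- generalized splitting of an alignment `α` with `l(α) = P₁ ++ P₂`
as `α = α₁ ++ β ++ α₂` where `β` is empty or a single operation, `l(α₁)` is a
prefix of `P₁` whose complementary suffix has length `< ω_max`, and `l(α₂)` is a
suffix of `P₂` whose complementary prefix has length `< ω_max`. -/
theorem alignment_split_generalized {α : Type*} [DecidableEq α]
    (Op : Finset (List α × List α)) (hne : Op.Nonempty)
    (hω : 1 ≤ Op.sup (fun op => op.1.length))
    (al : List (List α × List α)) (hal : ∀ op ∈ al, op ∈ Op)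
    (P₁ P₂ : List α) (h : (al.map Prod.fst).flatten = P₁ ++ P₂) :
    ∃ al₁ β al₂ : List (List α × List α),
      al = al₁ ++ β ++ al₂ ∧ β.length ≤ 1 ∧
      (al₁.map Prod.fst).flatten <+: P₁ ∧
      P₁.length - (al₁.map Prod.fst).flatten.length < Op.sup (fun op => op.1.length) ∧
      (al₂.map Prod.fst).flatten <:+ P₂ ∧
      P₂.length - (al₂.map Prod.fst).flatten.length < Op.sup (fun op => op.1.length) := by
  exact split_aux Op hω al hal P₁ P₂ h
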